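/- Suppose c ≥ 0 and x = (x_{i,t}) with x_{i,t} ∈ [0,1] for i ∈ {1,…,n}, t ∈ {1,…,B} satisfies: ∑_{t=1}^{B} x_{i,t} ≤ 1 for every i, and ∑_{i=1}^{n} ∑_{t'=1}^{t} x_{i,t'}·m_{i,t} ≤ c·t for every t ∈ {1,…,B}. Define x̄_{i,2^0} = x_{i,1}/2 + (x_{i,2}+x_{i,3})/2 and, for 1 ≤ j ≤ L, x̄_{i,2^j} = (1/2)·∑_{t=2^{j+1}}^{min(2^{j+2}−1, B)} x_{i,t}. Then: each x̄_{i,2^j} ∈ [0,1]; ∑_{j=0}^{L} x̄_{i,2^j} ≤ 1 for every i; ∑_{i=1}^{n} ∑_{j'=0}^{j} x̄_{i,2^{j'}}·m_{i,2^{j+1}} ≤ 2c·2^j for every j ∈ {0,…,L}; and ∑_{i=1}^{n} ∑_{j=0}^{L} ER_{i,2^{j+1}}·x̄_{i,2^j} ≥ (1/2)·∑_{i=1}^{n} ∑_{t=1}^{B} ER_{i,t}·x_{i,t}. In particular, the optimum of the polynomial-size LP (with variables x̄_{i,2^j}, the above constraints, and objective ∑_{i,j} ER_{i,2^{j+1}}·x̄_{i,2^j})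 is at least half the optimum of the time-indexed LP (with variables x_{i,t}, the above constraints with the same c, and objective ∑_{i,t} ER_{i,t}·x_{i,t}). -/
import Mathlib


open Finset

private def bdry (j : ℕ) : ℕ := if j = 0 then 0 else 2 ^ (j + 1) - 1

private lemma bdry_succ (j : ℕ) : bdry (j + 1) = 2 ^ (j + 2) - 1 := by
  simp [bdry]

private lemma bdry_le_succ (j : ℕ) : bdry j ≤ bdry (j + 1) := by
  have h := Nat.pow_le_pow_right (by norm_num : 1 ≤ 2) (by omega : j + 1 ≤ j + 2)
  unfold bdry
  split <;> split <;> omega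

private lemma sum_blocks (g : ℕ → ℝ) (J : ℕ) :
    ∑ j ∈ Icc 0 J, ∑ t ∈ Ioc (bdry j) (bdry (j + 1)), g t
      = ∑ t ∈ Ioc (0 : ℕ) (bdry (J + 1)), g t := by
  induction J with
  | zero => simp [bdry]
  | succ J ih =>
    rw [Finset.sum_Icc_succ_top (Nat.zero_le _), ih,
      Finset.sum_Ioc_consecutive g (Nat.zero_le _) (bdry_le_succ (J + 1))]

/-- Grouping the time-indexed LP solution `x` into a
polynomial-size LP solution `x̄` loses at most a factor 2. -/
theorem stmt_0 (n L B : ℕ) (hB : B = 2 ^ L)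
    (ER m : ℕ → ℕ → ℝ)
    (hER_nonneg : ∀ i ∈ Icc 1 n, ∀ t ∈ Icc 1 (2 * B), 0 ≤ ER i t)
    (hER_mono : ∀ i ∈ Icc 1 n, ∀ t ∈ Icc 1 (2 * B), ∀ t' ∈ Icc 1 (2 * B), t ≤ t' → ER i t' ≤ ER i t)
    (hER12 : ∀ i ∈ Icc 1 n, ER i 1 = ER i 2)
    (hm_nonneg : ∀ i ∈ Icc 1 n, ∀ t ∈ Icc 1 (2 * B), 0 ≤ m i t)
    (hm_mono : ∀ i ∈ Icc 1 n, ∀ t ∈ Icc 1 (2 * B), ∀ t' ∈ Icc 1 (2 * B), t ≤ t' → m i t ≤ m i t')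
    (hm_stable : ∀ i ∈ Icc 1 n, ∀ t ∈ Icc B (2 * B), m i t = m i B)
    (c : ℝ) (hc : 0 ≤ c)
    (x : ℕ → ℕ → ℝ)
    (hx01 : ∀ i ∈ Icc 1 n, ∀ t ∈ Icc 1 B, x i t ∈ Set.Icc (0 : ℝ) 1)
    (hxout : ∀ i ∈ Icc 1 n, ∀ t, t ∉ Icc 1 B → x i t = 0)
    (hxsum : ∀ i ∈ Icc 1 n, ∑ t ∈ Icc 1 B, x i t ≤ 1)
    (hxload : ∀ t ∈ Icc 1 B, ∑ i ∈ Icc 1 n, ∑ t' ∈ Icc 1 t, x i t' * m i t ≤ c * (t : ℝ))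
    (xbar : ℕ → ℕ → ℝ)
    (hxbar0 : ∀ i, xbar i 0 = x i 1 / 2 + (x i 2 + x i 3) / 2)
    (hxbarj : ∀ i, ∀ j, 1 ≤ j → j ≤ L →
      xbar i j = (1 / 2) * ∑ t ∈ Icc (2 ^ (j + 1)) (min (2 ^ (j + 2) - 1) B), x i t) :
    (∀ i ∈ Icc 1 n, ∀ j ∈ Icc 0 L, xbar i j ∈ Set.Icc (0 : ℝ) 1) ∧
    (∀ i ∈ Icc 1 n, ∑ j ∈ Icc 0 L, xbar i j ≤ 1) ∧
    (∀ j ∈ Icc 0 L, ∑ i ∈ Icc 1 n, ∑ j' ∈ Icc 0 j, xbar i j' * m i (2 ^ (j + 1))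
        ≤ 2 * c * (2 : ℝ) ^ j) ∧
    ((1 / 2) * ∑ i ∈ Icc 1 n, ∑ t ∈ Icc 1 B, ER i t * x i t
        ≤ ∑ i ∈ Icc 1 n, ∑ j ∈ Icc 0 L, ER i (2 ^ (j + 1)) * xbar i j) := by
  have hB1 : 1 ≤ B := by rw [hB]; exact Nat.one_le_two_pow
  have hB2 : B ≤ 2 * B := by omega
  have hBpow : B ≤ 2 ^ (L + 2) - 1 := by
    have h1 : 2 ^ L < 2 ^ (L + 2) := Nat.pow_lt_pow_right one_lt_two (by omega)
    omega
  have hpw : ∀ j : ℕ, j ≤ L → 2 ^ (j + 1) ≤ 2 * B := by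
    intro j hj
    calc 2 ^ (j + 1) ≤ 2 ^ (L + 1) := Nat.pow_le_pow_right (by norm_num) (by omega)
      _ = 2 * B := by rw [hB]; ring
  -- nonnegativity of x everywhere
  have hxnn : ∀ i ∈ Icc 1 n, ∀ t, 0 ≤ x i t := by
    intro i hi t
    by_cases ht : t ∈ Icc 1 B
    · exact (hx01 i hi t ht).1
    · rw [hxout i hi t ht]
  -- extending sums of functions vanishing above B
  have hext : ∀ (g : ℕ → ℝ), (∀ t, B < t → g t = 0) → ∀ b, B ≤ b →
      ∑ t ∈ Icc 1 b, g t = ∑ t ∈ Icc 1 B, g t := by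
    intro g hg b hb
    symm
    apply Finset.sum_subset (Icc_subset_Icc le_rfl hb)
    intro t ht hnt
    rw [mem_Icc] at ht hnt
    exact hg t (by omega)
  -- block form of xbar
  have hxbar_block : ∀ i ∈ Icc 1 n, ∀ j, j ≤ L →
      xbar i j = (1 / 2) * ∑ t ∈ Ioc (bdry j) (bdry (j + 1)), x i t := by
    intro i hi j hj
    rcases Nat.eq_zero_or_pos j with rfl | hj1
    · rw [hxbar0 i, show (Ioc (bdry 0) (bdry 1) : Finset ℕ) = {1, 2, 3} from by decide,
        Finset.sum_insert (by decide), Finset.sum_insert (by decide), Finset.sum_singleton]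
      ring
    · rw [hxbarj i j hj1 hj]
      congr 1
      have hpos : 1 ≤ 2 ^ (j + 1) := Nat.one_le_two_pow
      have hioc : (Ioc (bdry j) (bdry (j + 1)) : Finset ℕ)
          = Icc (2 ^ (j + 1)) (2 ^ (j + 2) - 1) := by
        rw [bdry_succ]
        unfold bdry
        rw [if_neg (by omega), ← Finset.Icc_add_one_left_eq_Ioc]
        congr 1
        omega
      rw [hioc]
      rcases le_or_gt (2 ^ (j + 2) - 1) B with h | h
      · rw [min_eq_left h]
      · rw [min_eq_right (by omega)]
        apply Finset.sum_subset (Icc_subset_Icc le_rfl (show B ≤ 2 ^ (j + 2) - 1 by omega))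
        intro t ht hnt
        rw [mem_Icc] at ht hnt
        exact hxout i hi t (by simp only [mem_Icc]; omega)
  -- partial sums of xbar
  have hpartial : ∀ i ∈ Icc 1 n, ∀ j, j ≤ L →
      ∑ j' ∈ Icc 0 j, xbar i j' = (1 / 2) * ∑ t ∈ Icc 1 (2 ^ (j + 2) - 1), x i t := by
    intro i hi j hj
    rw [Finset.sum_congr rfl
        (fun j' hj' => hxbar_block i hi j' (le_trans (mem_Icc.mp hj').2 hj)),
      ← Finset.mul_sum, sum_blocks, bdry_succ,
      show Icc 1 (2 ^ (j + 2) - 1) = Ioc 0 (2 ^ (j + 2) - 1) from Finset.Icc_add_one_left_eq_Ioc 0 _]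
  -- claim 2
  have h2 : ∀ i ∈ Icc 1 n, ∑ j ∈ Icc 0 L, xbar i j ≤ 1 := by
    intro i hi
    rw [hpartial i hi L le_rfl,
      hext (x i) (fun t ht => hxout i hi t (by simp only [mem_Icc]; omega)) _ hBpow]
    have := hxsum i hi
    linarith
  -- claim 1
  have h1 : ∀ i ∈ Icc 1 n, ∀ j ∈ Icc 0 L, xbar i j ∈ Set.Icc (0 : ℝ) 1 := by
    intro i hi j hj
    have hnn : ∀ j' ∈ Icc 0 L, 0 ≤ xbar i j' := by
      intro j' hj'
      rw [hxbar_block i hi j' (mem_Icc.mp hj').2]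
      have : (0:ℝ) ≤ ∑ t ∈ Ioc (bdry j') (bdry (j' + 1)), x i t :=
        Finset.sum_nonneg fun t _ => hxnn i hi t
      linarith
    exact ⟨hnn j hj, le_trans (Finset.single_le_sum hnn hj) (h2 i hi)⟩
  -- claim 3
  have h3 : ∀ j ∈ Icc 0 L, ∑ i ∈ Icc 1 n, ∑ j' ∈ Icc 0 j, xbar i j' * m i (2 ^ (j + 1))
      ≤ 2 * c * (2 : ℝ) ^ j := by
    intro j hj
    rw [mem_Icc] at hj
    set tstar := min (2 ^ (j + 2) - 1) B with htstar
    have hp1 : 1 < 2 ^ (j + 2) := Nat.one_lt_two_pow_iff.mpr (by omega)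
    have ht1 : 1 ≤ tstar := le_min (show 1 ≤ 2 ^ (j + 2) - 1 by omega) hB1
    have htB : tstar ≤ B := min_le_right _ _
    have hmle : ∀ i ∈ Icc 1 n, m i (2 ^ (j + 1)) ≤ m i tstar := by
      intro i hi
      rcases le_or_gt (2 ^ (j + 1)) B with h | h
      · refine hm_mono i hi _ (mem_Icc.mpr ⟨Nat.one_le_two_pow, hpw j hj.2⟩) tstar
          (mem_Icc.mpr ⟨ht1, by omega⟩) ?_
        refine le_min ?_ h
        have : 2 ^ (j + 1) ≤ 2 ^ (j + 2) := Nat.pow_le_pow_right (by norm_num) (by omega)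
        have : 2 ^ (j + 1) < 2 ^ (j + 2) := Nat.pow_lt_pow_right one_lt_two (by omega)
        omega
      · have hjL : j = L := by
          by_contra hne
          have h1 : 2 ^ (j + 1) ≤ 2 ^ L := Nat.pow_le_pow_right (by norm_num) (by omega)
          omega
        subst hjL
        have h2B : 2 ^ (j + 1) = 2 * B := by rw [hB]; ring
        have htsB : tstar = B := min_eq_right hBpow
        rw [h2B, hm_stable i hi (2 * B) (mem_Icc.mpr ⟨hB2, le_rfl⟩), htsB]
    calc ∑ i ∈ Icc 1 n, ∑ j' ∈ Icc 0 j, xbar i j' * m i (2 ^ (j + 1))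
        ≤ ∑ i ∈ Icc 1 n, (1 / 2) * ∑ t ∈ Icc 1 tstar, x i t * m i tstar := by
          refine Finset.sum_le_sum fun i hi => ?_
          rw [← Finset.sum_mul, hpartial i hi j hj.2]
          have hclip : ∑ t ∈ Icc 1 (2 ^ (j + 2) - 1), x i t = ∑ t ∈ Icc 1 tstar, x i t := by
            rcases le_or_gt (2 ^ (j + 2) - 1) B with h | h
            · rw [htstar, min_eq_left h]
            · rw [htstar, min_eq_right (by omega)]
              exact hext (x i) (fun t ht => hxout i hi t (by simp only [mem_Icc]; omega))
                _ (by omega)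
          rw [hclip, ← Finset.sum_mul]
          have hS : (0:ℝ) ≤ ∑ t ∈ Icc 1 tstar, x i t :=
            Finset.sum_nonneg fun t _ => hxnn i hi t
          have := hmle i hi
          nlinarith
      _ = (1 / 2) * ∑ i ∈ Icc 1 n, ∑ t ∈ Icc 1 tstar, x i t * m i tstar := by
          rw [Finset.mul_sum]
      _ ≤ (1 / 2) * (c * tstar) := by
          have := hxload tstar (mem_Icc.mpr ⟨ht1, htB⟩)
          linarith
      _ ≤ 2 * c * (2 : ℝ) ^ j := by
          have h4 : (tstar : ℝ) ≤ 4 * 2 ^ j := by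
            have h5 : tstar ≤ 2 ^ (j + 2) := by
              have := min_le_left (2 ^ (j + 2) - 1) B
              omega
            calc (tstar : ℝ) ≤ ((2 ^ (j + 2) : ℕ) : ℝ) := by exact_mod_cast h5
              _ = 4 * 2 ^ j := by push_cast; ring
          have := mul_le_mul_of_nonneg_left h4 hc
          linarith
  -- claim 4
  have h4 : ∀ i ∈ Icc 1 n,
      (1 / 2) * ∑ t ∈ Icc 1 B, ER i t * x i t
        ≤ ∑ j ∈ Icc 0 L, ER i (2 ^ (j + 1)) * xbar i j := by
    intro i hi
    have hterm : ∀ j ∈ Icc 0 L, ∀ t ∈ Ioc (bdry j) (bdry (j + 1)),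
        ER i t * x i t ≤ ER i (2 ^ (j + 1)) * x i t := by
      intro j hj t ht
      rw [mem_Icc] at hj
      rw [mem_Ioc] at ht
      by_cases htB : t ≤ B
      · have ht1 : 1 ≤ t := by
          have := Nat.zero_le (bdry j)
          omega
        have hxt : 0 ≤ x i t := hxnn i hi t
        have hmem2 : 2 ^ (j + 1) ∈ Icc 1 (2 * B) :=
          mem_Icc.mpr ⟨Nat.one_le_two_pow, hpw j hj.2⟩
        have hmemt : t ∈ Icc 1 (2 * B) := mem_Icc.mpr ⟨ht1, by omega⟩
        have hER : ER i t ≤ ER i (2 ^ (j + 1)) := by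
          rcases Nat.eq_zero_or_pos j with rfl | hj1
          · rcases eq_or_lt_of_le ht1 with h1 | h1
            · rw [← h1, show (2:ℕ) ^ (0 + 1) = 2 from rfl]
              exact le_of_eq (hER12 i hi)
            · exact hER_mono i hi _ hmem2 t hmemt (by norm_num; omega)
          · have hbj : bdry j = 2 ^ (j + 1) - 1 := by
              unfold bdry; rw [if_neg (by omega)]
            exact hER_mono i hi _ hmem2 t hmemt (by omega)
        exact mul_le_mul_of_nonneg_right hER hxt
      · rw [hxout i hi t (by simp only [mem_Icc]; omega), mul_zero, mul_zero]
    calc (1 / 2) * ∑ t ∈ Icc 1 B, ER i t * x i t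
        = (1 / 2) * ∑ j ∈ Icc 0 L, ∑ t ∈ Ioc (bdry j) (bdry (j + 1)), ER i t * x i t := by
          have hERx0 : ∀ t, B < t → ER i t * x i t = 0 := fun t ht => by
            rw [hxout i hi t (by simp only [mem_Icc]; omega), mul_zero]
          rw [sum_blocks, bdry_succ,
            show Ioc 0 (2 ^ (L + 2) - 1) = Icc 1 (2 ^ (L + 2) - 1) from
              (Finset.Icc_add_one_left_eq_Ioc 0 _).symm,
            hext (fun t => ER i t * x i t) hERx0 _ hBpow]
      _ ≤ (1 / 2) * ∑ j ∈ Icc 0 L, ∑ t ∈ Ioc (bdry j) (bdry (j + 1)),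
            ER i (2 ^ (j + 1)) * x i t := by
          have := Finset.sum_le_sum fun j hj => Finset.sum_le_sum (hterm j hj)
          linarith
      _ = ∑ j ∈ Icc 0 L, ER i (2 ^ (j + 1)) * xbar i j := by
          rw [Finset.mul_sum]
          refine Finset.sum_congr rfl fun j hj => ?_
          rw [hxbar_block i hi j (mem_Icc.mp hj).2, ← Finset.mul_sum]
          ring
  refine ⟨h1, h2, h3, ?_⟩
  rw [Finset.mul_sum]
  exact Finset.sum_le_sum h4
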